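/- A Hausdorff topological group G is ω-balanced and feathered if and only if for each open neighborhood O of the identity in G there is a compact invariant (normal) subgroup H such that H ⊆ O and the quotient space G/H is metrizable. -/

import Mathlib

open Filter Topology Set Pointwise TopologicalSpace

universe u

section Defs

variable {X : Type*}

/-- A subset `s` of a topological space is countably compact (in the ambient space) if every
countable open cover of `s` (indexed by `ℕ`) has a finite subcover. -/
def IsCountablyCompactIn [TopologicalSpace X] (s : Set X) : Prop :=
  ∀ U : ℕ → Set X, (∀ n, IsOpen (U n)) → s ⊆ ⋃ n, U n → ∃ t : Finset ℕ, s ⊆ ⋃ n ∈ t, U n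

/-- `U` is a q-sequence at `x`: a sequence of open neighbourhoods of `x` such that every
sequence of points chosen from the `U n` has an accumulation (cluster) point in `X`. -/
def IsQSequenceAt [TopologicalSpace X] (x : X) (U : ℕ → Set X) : Prop :=
  (∀ n, IsOpen (U n) ∧ x ∈ U n) ∧
    ∀ u : ℕ → X, (∀ n, u n ∈ U n) → ∃ p : X, MapClusterPt p Filter.atTop u

/-- A space is a q-space if every point has a q-sequence. -/
def QSpace (X : Type*) [TopologicalSpace X] : Prop :=
  ∀ x : X, ∃ U : ℕ → Set X, IsQSequenceAt x U

/-- A space is a strict q-space if every point has a q-sequence whose intersection is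
sequentially compact. -/
def StrictQSpace (X : Type*) [TopologicalSpace X] : Prop :=
  ∀ x : X, ∃ U : ℕ → Set X, IsQSequenceAt x U ∧ IsSeqCompact (⋂ n, U n)

/-- `U` is a strong q-sequence at `x`: a sequence of open neighbourhoods of `x` such that every
sequence of points chosen from the `U n` has a convergent subsequence. -/
def IsStrongQSequenceAt [TopologicalSpace X] (x : X) (U : ℕ → Set X) : Prop :=
  (∀ n, IsOpen (U n) ∧ x ∈ U n) ∧
    ∀ u : ℕ → X, (∀ n, u n ∈ U n) →
      ∃ (p : X) (φ : ℕ → ℕ), StrictMono φ ∧ Filter.Tendsto (u ∘ φ) Filter.atTop (nhds p)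

/-- A space is a strong q-space if every point has a strong q-sequence. -/
def StrongQSpace (X : Type*) [TopologicalSpace X] : Prop :=
  ∀ x : X, ∃ U : ℕ → Set X, IsStrongQSequenceAt x U

/-- A subset `A` is of countable character in `X` if there is a countable family of open
neighbourhoods of `A` such that every open neighbourhood of `A` contains a member of it. -/
def HasCountableCharacter [TopologicalSpace X] (A : Set X) : Prop :=
  ∃ U : ℕ → Set X, (∀ n, IsOpen (U n) ∧ A ⊆ U n) ∧
    ∀ W : Set X, IsOpen W → A ⊆ W → ∃ n, U n ⊆ W

/-- A topological group is ω-balanced if for every neighbourhood `U` of the identity there is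
a countable family `γ` of open neighbourhoods of the identity such that for every `x` some
`V ∈ γ` satisfies `xVx⁻¹ ⊆ U`. -/
def OmegaBalanced (G : Type*) [Group G] [TopologicalSpace G] : Prop :=
  ∀ U : Set G, U ∈ nhds (1 : G) → ∃ γ : Set (Set G), γ.Countable ∧
    (∀ V ∈ γ, IsOpen V ∧ (1 : G) ∈ V) ∧
    ∀ x : G, ∃ V ∈ γ, ∀ v ∈ V, x * v * x⁻¹ ∈ U

/-- A topological group is ω-narrow if for every open neighbourhood `V` of the identity there
is a countable set `A` with `A * V = G`. -/
def OmegaNarrow (G : Type*) [Group G] [TopologicalSpace G] : Prop :=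
  ∀ V : Set G, IsOpen V → (1 : G) ∈ V → ∃ A : Set G, A.Countable ∧ A * V = Set.univ

/-- A topological group is feathered if it has a nonempty compact subset of countable
character. -/
def IsFeathered (G : Type*) [Group G] [TopologicalSpace G] : Prop :=
  ∃ K : Set G, K.Nonempty ∧ IsCompact K ∧ HasCountableCharacter K

/-- A subgroup `H` of a topological group is neutral if for every open neighbourhood `U` of the
identity there is an open neighbourhood `V` of the identity with `HV ⊆ UH`. -/
def IsNeutralSubgroup {G : Type*} [Group G] [TopologicalSpace G] (H : Subgroup G) : Prop :=
  ∀ U : Set G, IsOpen U → (1 : G) ∈ U →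
    ∃ V : Set G, IsOpen V ∧ (1 : G) ∈ V ∧ (H : Set G) * V ⊆ U * (H : Set G)

end Defs

section Aux

open Uniformity

variable {G : Type*} [Group G] [TopologicalSpace G] [IsTopologicalGroup G]

theorem exists_symm_sq {V : Set G} (h : V ∈ 𝓝 (1:G)) :
    ∃ W : Set G, (IsOpen W ∧ (1:G) ∈ W) ∧ W⁻¹ = W ∧ W * W ⊆ V := by
  obtain ⟨W, hWo, hW1, hWm⟩ := exists_open_nhds_one_mul_subset h
  refine ⟨W ∩ W⁻¹, ⟨hWo.inter hWo.inv, ⟨hW1, by simpa using hW1⟩⟩, ?_, ?_⟩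
  · ext x; simp [and_comm]
  · exact (Set.mul_subset_mul inter_subset_left inter_subset_left).trans hWm

theorem closure_subset_sq {W : Set G} (ho : IsOpen W) (h1 : (1:G) ∈ W) (hs : W⁻¹ = W) :
    closure W ⊆ W * W := by
  intro x hx
  have hxW : x ∈ x • W := ⟨1, h1, mul_one x⟩
  obtain ⟨w, hw1, hw2⟩ := mem_closure_iff.mp hx _ (ho.smul x) hxW
  obtain ⟨w', hw', rfl⟩ := hw1
  have h3 : w'⁻¹ ∈ W := Set.mem_inv.mp (hs ▸ Set.inv_mem_inv.mpr hw')
  have h4 : (x • w') * w'⁻¹ ∈ W * W := Set.mul_mem_mul hw2 h3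
  simpa [smul_eq_mul, mul_assoc] using h4

open scoped Classical in
noncomputable def sqNhd (V : Set G) : Set G :=
  if h : V ∈ 𝓝 (1:G) then (exists_symm_sq h).choose else Set.univ

set_option linter.unusedSectionVars false in
theorem sqNhd_good (V : Set G) : IsOpen (sqNhd V) ∧ (1:G) ∈ sqNhd V := by
  classical unfold sqNhd; split
  · exact (exists_symm_sq ‹_›).choose_spec.1
  · exact ⟨isOpen_univ, trivial⟩

set_option linter.unusedSectionVars false in
theorem sqNhd_spec {V : Set G} (h : V ∈ 𝓝 (1:G)) :
    (sqNhd V)⁻¹ = sqNhd V ∧ sqNhd V * sqNhd V ⊆ V := by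
  classical unfold sqNhd; rw [dif_pos h]; exact (exists_symm_sq h).choose_spec.2

open scoped Classical in
noncomputable def gamF (hb : OmegaBalanced G) (V : Set G) : Set (Set G) :=
  if h : V ∈ 𝓝 (1:G) then (hb V h).choose else {Set.univ}

set_option linter.unusedSectionVars false in
theorem gamF_countable (hb : OmegaBalanced G) (V : Set G) : (gamF hb V).Countable := by
  classical unfold gamF; split
  · exact (hb V ‹_›).choose_spec.1
  · exact countable_singleton _

set_option linter.unusedSectionVars false in
theorem gamF_good (hb : OmegaBalanced G) (V : Set G) :
    ∀ W ∈ gamF hb V, IsOpen W ∧ (1:G) ∈ W := by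
  classical unfold gamF; split
  · exact (hb V ‹_›).choose_spec.2.1
  · rintro W rfl; exact ⟨isOpen_univ, trivial⟩

set_option linter.unusedSectionVars false in
theorem gamF_conj (hb : OmegaBalanced G) {V : Set G} (h : V ∈ 𝓝 (1:G)) (x : G) :
    ∃ W ∈ gamF hb V, ∀ w ∈ W, x * w * x⁻¹ ∈ V := by
  classical unfold gamF; rw [dif_pos h]; exact (hb V h).choose_spec.2.2 x

noncomputable def stepF (hb : OmegaBalanced G) (S : Set (Set G)) : Set (Set G) :=
  (S ∪ sqNhd '' S) ∪ ((⋃ V ∈ S, gamF hb V) ∪ Set.image2 (· ∩ ·) S S)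

theorem exists_good_family (hb : OmegaBalanced G) (S0 : Set (Set G))
    (h0 : S0.Countable) (hg0 : ∀ V ∈ S0, IsOpen V ∧ (1:G) ∈ V) :
    ∃ S : Set (Set G), S.Countable ∧ S0 ⊆ S ∧
      (∀ V ∈ S, IsOpen V ∧ (1:G) ∈ V) ∧
      (∀ V ∈ S, ∃ W, W ∈ S ∧ (IsOpen W ∧ (1:G) ∈ W) ∧ W⁻¹ = W ∧ W * W ⊆ V) ∧
      (∀ V ∈ S, ∀ x : G, ∃ W ∈ S, ∀ w ∈ W, x * w * x⁻¹ ∈ V) ∧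
      (∀ V ∈ S, ∀ V' ∈ S, V ∩ V' ∈ S) := by
  classical
  set f : Set (Set G) → Set (Set G) := stepF hb with hf
  have hsub : ∀ S : Set (Set G), S ⊆ f S := fun S =>
    subset_union_left.trans subset_union_left
  have hgood_step : ∀ S : Set (Set G), (∀ V ∈ S, IsOpen V ∧ (1:G) ∈ V) →
      ∀ V ∈ f S, IsOpen V ∧ (1:G) ∈ V := by
    intro S hS V hV
    rcases hV with hV | hV
    · rcases hV with hV | hV
      · exact hS V hV
      · obtain ⟨W, _, rfl⟩ := hV; exact sqNhd_good W
    · rcases hV with hV | hV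
      · obtain ⟨W, hW, hVW⟩ := mem_iUnion₂.mp hV
        exact gamF_good hb W V hVW
      · obtain ⟨A, hA, B, hB, rfl⟩ := hV
        exact ⟨(hS A hA).1.inter (hS B hB).1, ⟨(hS A hA).2, (hS B hB).2⟩⟩
  have hcnt_step : ∀ S : Set (Set G), S.Countable → (f S).Countable := by
    intro S hS
    exact ((hS.union (hS.image _)).union ((hS.biUnion fun V _ => gamF_countable hb V).union
      (hS.image2 hS _)))
  set T : ℕ → Set (Set G) := fun n => f^[n] S0 with hT
  have hTsucc : ∀ n, T (n+1) = f (T n) := fun n => Function.iterate_succ_apply' f n S0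
  have hTmono : Monotone T := monotone_nat_of_le_succ fun n => by
    rw [hTsucc n]; exact hsub _
  have hTgood : ∀ n, ∀ V ∈ T n, IsOpen V ∧ (1:G) ∈ V := by
    intro n
    induction n with
    | zero => exact hg0
    | succ n ih => rw [hTsucc n]; exact hgood_step _ ih
  have hTcnt : ∀ n, (T n).Countable := by
    intro n
    induction n with
    | zero => exact h0
    | succ n ih => rw [hTsucc n]; exact hcnt_step _ ih
  refine ⟨⋃ n, T n, countable_iUnion hTcnt, subset_iUnion T 0, ?_, ?_, ?_, ?_⟩
  · rintro V hV
    obtain ⟨n, hn⟩ := mem_iUnion.mp hV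
    exact hTgood n V hn
  · rintro V hV
    obtain ⟨n, hn⟩ := mem_iUnion.mp hV
    have hgood := hTgood n V hn
    have hnhds : V ∈ 𝓝 (1:G) := hgood.1.mem_nhds hgood.2
    refine ⟨sqNhd V, mem_iUnion.mpr ⟨n+1, ?_⟩, sqNhd_good V, sqNhd_spec hnhds⟩
    rw [hTsucc n]
    exact subset_union_left (Or.inr (mem_image_of_mem _ hn))
  · rintro V hV x
    obtain ⟨n, hn⟩ := mem_iUnion.mp hV
    have hgood := hTgood n V hn
    obtain ⟨W, hWmem, hWconj⟩ := gamF_conj hb (hgood.1.mem_nhds hgood.2) x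
    refine ⟨W, mem_iUnion.mpr ⟨n+1, ?_⟩, hWconj⟩
    rw [hTsucc n]
    exact Or.inr (Or.inl (mem_iUnion₂.mpr ⟨V, hn, hWmem⟩))
  · rintro V hV V' hV'
    obtain ⟨n, hn⟩ := mem_iUnion.mp hV
    obtain ⟨m, hm⟩ := mem_iUnion.mp hV'
    refine mem_iUnion.mpr ⟨max n m + 1, ?_⟩
    rw [hTsucc _]
    exact Or.inr (Or.inr (mem_image2_of_mem (hTmono (le_max_left n m) hn)
      (hTmono (le_max_right n m) hm)))

theorem metrizable_of_char (H : Subgroup G) [H.Normal] (hcl : IsClosed (H : Set G))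
    (hchar : HasCountableCharacter (H : Set G)) : MetrizableSpace (G ⧸ H) := by
  haveI : IsClosed ((H : Subgroup G) : Set G) := hcl
  obtain ⟨F, hF1, hF2⟩ := hchar
  have hbasis : (𝓝 (1 : G ⧸ H)).HasBasis (fun _ : ℕ => True)
      (fun n => (QuotientGroup.mk : G → G ⧸ H) '' F n) := by
    constructor
    intro s
    constructor
    · intro hs
      obtain ⟨t, hts, hto, ht1⟩ := mem_nhds_iff.mp hs
      have hW : IsOpen ((QuotientGroup.mk : G → G ⧸ H) ⁻¹' t) :=
        hto.preimage continuous_quotient_mk'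
      have hHW : (H : Set G) ⊆ (QuotientGroup.mk : G → G ⧸ H) ⁻¹' t := by
        intro h hh
        have h2 : (QuotientGroup.mk h : G ⧸ H) = 1 := (QuotientGroup.eq_one_iff h).mpr hh
        simpa [Set.mem_preimage, h2] using ht1
      obtain ⟨n, hn⟩ := hF2 _ hW hHW
      exact ⟨n, trivial, (Set.image_mono hn).trans
        ((Set.image_preimage_subset _ _).trans hts)⟩
    · rintro ⟨n, -, hn⟩
      refine mem_of_superset ?_ hn
      have hopen : IsOpen ((QuotientGroup.mk : G → G ⧸ H) '' F n) :=
        QuotientGroup.isOpenMap_coe _ (hF1 n).1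
      have h1 : (1 : G ⧸ H) ∈ (QuotientGroup.mk : G → G ⧸ H) '' F n :=
        ⟨1, (hF1 n).2 H.one_mem, QuotientGroup.mk_one (N := H)⟩
      exact hopen.mem_nhds h1
  haveI : (𝓝 (1 : G ⧸ H)).IsCountablyGenerated := hbasis.isCountablyGenerated
  letI : UniformSpace (G ⧸ H) := IsTopologicalGroup.rightUniformSpace (G ⧸ H)
  haveI : (𝓤 (G ⧸ H)).IsCountablyGenerated := by
    rw [uniformity_eq_comap_nhds_one']
    exact Filter.comap.isCountablyGenerated _ _
  exact UniformSpace.metrizableSpace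

theorem char_of_metrizable (H : Subgroup G) [H.Normal] (hcpt : IsCompact (H : Set G))
    (hm : MetrizableSpace (G ⧸ H)) :
    ∃ F : ℕ → Set G, (∀ n, IsOpen (F n) ∧ (H : Set G) ⊆ F n) ∧
      ∀ W : Set G, IsOpen W → (H : Set G) ⊆ W → ∃ n, F n ⊆ W := by
  haveI := hm
  haveI : (𝓝 (1 : G ⧸ H)).IsCountablyGenerated := inferInstance
  obtain ⟨b, hb⟩ := (𝓝 (1 : G ⧸ H)).exists_antitone_basis
  refine ⟨fun n => (QuotientGroup.mk : G → G ⧸ H) ⁻¹' (interior (b n)), fun n => ?_, ?_⟩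
  · refine ⟨isOpen_interior.preimage continuous_quotient_mk', ?_⟩
    intro h hh
    have h1 : (QuotientGroup.mk h : G ⧸ H) = 1 := (QuotientGroup.eq_one_iff h).mpr hh
    have h2 : b n ∈ 𝓝 (1 : G ⧸ H) := hb.mem n
    simpa [Set.mem_preimage, h1] using mem_interior_iff_mem_nhds.mpr h2
  · intro W hWo hHW
    obtain ⟨V, hV, hVW⟩ := compact_open_separated_mul_left hcpt hWo hHW
    have hVi : (1 : G) ∈ interior V := mem_interior_iff_mem_nhds.mpr hV
    have hmem : (QuotientGroup.mk : G → G ⧸ H) '' (interior V) ∈ 𝓝 (1 : G ⧸ H) := by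
      have hopen : IsOpen ((QuotientGroup.mk : G → G ⧸ H) '' interior V) :=
        QuotientGroup.isOpenMap_coe _ isOpen_interior
      exact hopen.mem_nhds ⟨1, hVi, QuotientGroup.mk_one (N := H)⟩
    obtain ⟨n, -, hn⟩ := hb.toHasBasis.mem_iff.mp hmem
    refine ⟨n, ?_⟩
    intro g hg
    have hg2 : (QuotientGroup.mk g : G ⧸ H) ∈ (QuotientGroup.mk : G → G ⧸ H) '' interior V :=
      hn (interior_subset hg)
    obtain ⟨v, hv, hvg⟩ := hg2
    have hmem' : v⁻¹ * g ∈ H := QuotientGroup.eq.mp hvg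
    have hgeq : g = v * (v⁻¹ * g) := by group
    rw [hgeq]
    exact hVW (Set.mul_mem_mul (interior_subset hv) hmem')

theorem feathered_norm {K₀ : Set G} {U₀ : ℕ → Set G} (k₀ : G) (hk₀ : k₀ ∈ K₀)
    (hcpt : IsCompact K₀) (hU₀ : ∀ n, IsOpen (U₀ n) ∧ K₀ ⊆ U₀ n)
    (hchar : ∀ W : Set G, IsOpen W → K₀ ⊆ W → ∃ n, U₀ n ⊆ W) :
    ∃ (K : Set G) (U : ℕ → Set G), (1:G) ∈ K ∧ IsCompact K ∧
      (∀ n, IsOpen (U n) ∧ K ⊆ U n) ∧ ∀ W : Set G, IsOpen W → K ⊆ W → ∃ n, U n ⊆ W := by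
  refine ⟨k₀⁻¹ • K₀, fun n => k₀⁻¹ • U₀ n, ⟨k₀, hk₀, inv_mul_cancel k₀⟩,
    hcpt.smul _, fun n => ⟨(hU₀ n).1.smul _, Set.smul_set_mono (hU₀ n).2⟩, ?_⟩
  intro W hWo hKW
  have hK₀W : K₀ ⊆ k₀ • W := by simpa using Set.smul_set_subset_iff_subset_inv_smul_set.mp hKW
  obtain ⟨n, hn⟩ := hchar _ (hWo.smul k₀) hK₀W
  exact ⟨n, Set.smul_set_subset_iff_subset_inv_smul_set.mpr (by simpa using hn)⟩

theorem forward_direction [T2Space G] (hbal : OmegaBalanced G) (hfea : IsFeathered G)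
    {O : Set G} (hO : IsOpen O) (hO1 : (1:G) ∈ O) :
    ∃ H : Subgroup G, H.Normal ∧ IsCompact (H : Set G) ∧ (H : Set G) ⊆ O ∧
      MetrizableSpace (G ⧸ H) := by
  classical
  obtain ⟨K₀, ⟨k₀, hk₀⟩, hK₀c, U₀, hU₀, hU₀char⟩ := hfea
  obtain ⟨K, U, hK1, hKc, hU, hUchar⟩ := feathered_norm k₀ hk₀ hK₀c hU₀ hU₀char
  have hseed : ∀ n, ∃ V : Set G, (IsOpen V ∧ (1:G) ∈ V) ∧ K * V ⊆ U n := by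
    intro n
    obtain ⟨V, hV, hKV⟩ := compact_open_separated_mul_right hKc (hU n).1 (hU n).2
    exact ⟨interior V, ⟨isOpen_interior, mem_interior_iff_mem_nhds.mpr hV⟩,
      (Set.mul_subset_mul_left interior_subset).trans hKV⟩
  choose seed hseedg hseedU using hseed
  obtain ⟨S, hScnt, hS0, hSgood, hSsq, hSconj, hSint⟩ :=
    exists_good_family hbal (insert O (Set.range seed)) ((countable_range seed).insert O)
      (by rintro V (rfl | ⟨n, rfl⟩); exacts [⟨hO, hO1⟩, hseedg n])
  have hOS : O ∈ S := hS0 (mem_insert _ _)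
  have hseedS : ∀ n, seed n ∈ S := fun n => hS0 (mem_insert_of_mem _ ⟨n, rfl⟩)
  choose! sq hsqS hsqgood hsqsymm hsqsq using hSsq
  set Hset : Set G := ⋂₀ S with hHset
  have hHsub : ∀ V ∈ S, Hset ⊆ V := fun V hV a ha => ha V hV
  have hsqsubV : ∀ V ∈ S, sq V ⊆ V := by
    intro V hV w hw
    have := hsqsq V hV (Set.mul_mem_mul hw (hsqgood V hV).2)
    simpa using this
  have hH1 : (1:G) ∈ Hset := fun V hV => (hSgood V hV).2
  have hHUn : ∀ n, Hset ⊆ U n := by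
    intro n a ha
    have h1 : a ∈ seed n := hHsub _ (hseedS n) ha
    have : (1:G) * a ∈ K * seed n := Set.mul_mem_mul hK1 h1
    simpa using hseedU n this
  have hHK : Hset ⊆ K := by
    intro a ha
    by_contra hnot
    have hsub : K ⊆ {a}ᶜ := fun k hk hka => hnot (mem_singleton_iff.mp hka ▸ hk)
    obtain ⟨n, hn⟩ := hUchar _ isOpen_compl_singleton hsub
    exact hn (hHUn n ha) rfl
  have hHeq : Hset = ⋂ (V : S), closure (sq V.1) := by
    apply subset_antisymm
    · intro a ha
      exact mem_iInter.mpr fun V => subset_closure (ha _ (hsqS V.1 V.2))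
    · intro a ha V hV
      have h1 : a ∈ closure (sq V) := mem_iInter.mp ha ⟨V, hV⟩
      exact hsqsq V hV (closure_subset_sq (hsqgood V hV).1 (hsqgood V hV).2 (hsqsymm V hV) h1)
  have hHcl : IsClosed Hset := by
    rw [hHeq]; exact isClosed_iInter fun V => isClosed_closure
  have hHcpt : IsCompact Hset := hKc.of_isClosed_subset hHcl hHK
  set H : Subgroup G :=
    { carrier := Hset
      one_mem' := hH1
      mul_mem' := by
        intro a b ha hb
        intro V hV
        exact hsqsq V hV (Set.mul_mem_mul (ha _ (hsqS V hV)) (hb _ (hsqS V hV)))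
      inv_mem' := by
        intro a ha
        intro V hV
        have h1 : a ∈ sq V := ha _ (hsqS V hV)
        have h2 : a⁻¹ ∈ (sq V)⁻¹ := Set.inv_mem_inv.mpr h1
        rw [hsqsymm V hV] at h2
        exact hsqsubV V hV h2 } with hHdef
  have hHnormal : H.Normal := by
    constructor
    intro n hn g
    intro V hV
    obtain ⟨W, hWS, hWconj⟩ := hSconj V hV g
    exact hWconj n (hn _ hWS)
  have hchar : HasCountableCharacter (H : Set G) := by
    set C : Set (Set G) := Set.image2 (fun (k : ℕ) V => U k ∩ V) Set.univ S with hC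
    have hCcnt : C.Countable := Set.countable_univ.image2 hScnt _
    have hCne : C.Nonempty := ⟨U 0 ∩ O, mem_image2_of_mem trivial hOS⟩
    obtain ⟨e, he⟩ := hCcnt.exists_eq_range hCne
    refine ⟨e, ?_, ?_⟩
    · intro n
      have hmem : e n ∈ C := he ▸ mem_range_self n
      obtain ⟨k, -, V, hV, heq⟩ := hmem
      have heq' : e n = U k ∩ V := heq.symm
      rw [heq']
      exact ⟨(hU k).1.inter (hSgood V hV).1,
        subset_inter (hHUn k) (hHsub V hV)⟩
    · intro W hWo hHW
      have hC₀ : IsCompact (K ∩ Wᶜ) := hKc.inter_right hWo.isClosed_compl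
      have hempty : (K ∩ Wᶜ) ∩ ⋂ (V : S), closure (sq V.1) = ∅ := by
        rw [← hHeq]
        apply Set.eq_empty_iff_forall_notMem.mpr
        rintro x ⟨⟨-, hxW⟩, hxH⟩
        exact hxW (hHW hxH)
      obtain ⟨u, hu⟩ := hC₀.elim_finite_subfamily_closed _ (fun V => isClosed_closure) hempty
      have hlb : ∀ w : Finset ↑S, ∃ Z, Z ∈ S ∧ ∀ V ∈ w, Z ⊆ sq V.1 := by
        classical
        intro w
        induction w using Finset.induction_on with
        | empty => exact ⟨O, hOS, by simp⟩
        | @insert a t hni ih =>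
          obtain ⟨Z, hZS, hZlb⟩ := ih
          refine ⟨sq a.1 ∩ Z, hSint _ (hsqS a.1 a.2) _ hZS, ?_⟩
          intro V hV
          rcases Finset.mem_insert.mp hV with rfl | hV
          · exact inter_subset_left
          · exact inter_subset_right.trans (hZlb V hV)
      obtain ⟨Z, hZS, hZlb⟩ := hlb u
      have hKZ : K ∩ closure Z ⊆ W := by
        intro x hx
        by_contra hxW
        have hxmem : x ∈ (K ∩ Wᶜ) ∩ ⋂ V ∈ u, closure (sq V.1) := by
          refine ⟨⟨hx.1, hxW⟩, mem_iInter₂.mpr fun V hV => ?_⟩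
          exact closure_mono (hZlb V hV) hx.2
        rw [hu] at hxmem
        exact hxmem
      have hsqZS : sq Z ∈ S := hsqS Z hZS
      have hclm : closure (sq Z) ⊆ closure Z :=
        ((closure_subset_sq (hsqgood Z hZS).1 (hsqgood Z hZS).2 (hsqsymm Z hZS)).trans
          (hsqsq Z hZS)).trans subset_closure
      have hT : IsOpen (W ∪ (closure (sq Z))ᶜ) := hWo.union isClosed_closure.isOpen_compl
      have hKT : K ⊆ W ∪ (closure (sq Z))ᶜ := by
        intro k hk
        by_cases hkc : k ∈ closure (sq Z)
        · exact Or.inl (hKZ ⟨hk, hclm hkc⟩)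
        · exact Or.inr hkc
      obtain ⟨k, hk⟩ := hUchar _ hT hKT
      have hmemC : U k ∩ sq Z ∈ C := mem_image2_of_mem trivial hsqZS
      rw [he] at hmemC
      obtain ⟨n, hn⟩ := hmemC
      refine ⟨n, ?_⟩
      rw [hn]
      intro x hx
      rcases hk hx.1 with hxW | hxc
      · exact hxW
      · exact absurd (subset_closure hx.2) hxc
  haveI := hHnormal
  exact ⟨H, hHnormal, hHcpt, hHsub O hOS, metrizable_of_char H hHcl hchar⟩

end Aux

theorem omegaBalanced_and_feathered_iff (G : Type*) [Group G] [TopologicalSpace G] [IsTopologicalGroup G] [T2Space G] :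
    (OmegaBalanced G ∧ IsFeathered G) ↔
      ∀ O : Set G, IsOpen O → (1 : G) ∈ O →
        ∃ H : Subgroup G, H.Normal ∧ IsCompact (H : Set G) ∧ (H : Set G) ⊆ O ∧
          MetrizableSpace (G ⧸ H) := by
  constructor
  · rintro ⟨hbal, hfea⟩ O hO hO1
    exact forward_direction hbal hfea hO hO1
  · intro hP
    constructor
    · intro U hU
      obtain ⟨H, hnorm, hcpt, hsubU, hm⟩ :=
        hP (interior U) isOpen_interior (mem_interior_iff_mem_nhds.mpr hU)
      haveI := hnorm
      obtain ⟨F, hF1, hF2⟩ := char_of_metrizable H hcpt hm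
      refine ⟨Set.range F, countable_range F, ?_, ?_⟩
      · rintro V ⟨n, rfl⟩
        exact ⟨(hF1 n).1, (hF1 n).2 H.one_mem⟩
      · intro x
        have hWo : IsOpen ((fun g => x * g * x⁻¹) ⁻¹' interior U) :=
          isOpen_interior.preimage (by continuity)
        have hHW : (H : Set G) ⊆ (fun g => x * g * x⁻¹) ⁻¹' interior U := by
          intro h hh
          exact hsubU (hnorm.conj_mem h hh x)
        obtain ⟨n, hn⟩ := hF2 _ hWo hHW
        exact ⟨F n, ⟨n, rfl⟩, fun v hv => interior_subset (hn hv)⟩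
    · obtain ⟨H, hnorm, hcpt, -, hm⟩ := hP Set.univ isOpen_univ trivial
      haveI := hnorm
      obtain ⟨F, hF1, hF2⟩ := char_of_metrizable H hcpt hm
      exact ⟨(H : Set G), ⟨1, H.one_mem⟩, hcpt, F, hF1, hF2⟩
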